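/- arXiv:2509.09105 — 2 statements merged into one kernel-verified Lean document; each statement's English description precedes it below -/
import Mathlib

section
/- Let $(\lambda_t)_{t\ge 0}$ and $(\varepsilon_t)_{t\ge 0}$ be real sequences and $(c_i)_{i\ge 1}$ a summable real sequence. Then $\lambda_t = \varepsilon_t + \sum_{i=0}^{t-1} c_{t-i}\lambda_i$ for all $t \ge 0$ if and only if $\lambda_t = \varepsilon_t + \sum_{i=0}^{t-1} \psi_{t-i}\varepsilon_i$ for all $t \ge 0$, where $\psi = \sum_{k=1}^\infty c^{*k}$ (assuming this series converges absolutely). -/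
open scoped BigOperators

noncomputable section

/-- Convolution of sequences indexed by positive integers (index 0 unused):
`(u*v)_m = ∑_{j=1}^{m-1} u_j v_{m-j}`. -/
def seqConv (u v : ℕ → ℝ) : ℕ → ℝ := fun m => ∑ j ∈ Finset.Ioo 0 m, u j * v (m - j)

/-- `seqConvPow u k` is the `(k+1)`-fold convolution power `u^{*(k+1)}`. -/
def seqConvPow (u : ℕ → ℝ) : ℕ → ℕ → ℝ
  | 0 => u
  | k + 1 => seqConv u (seqConvPow u k)

lemma pow_vanish (c : ℕ → ℝ) : ∀ k m, 1 ≤ m → m ≤ k → seqConvPow c k m = 0 := by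
  intro k
  induction k with
  | zero => intro m h1 h0; omega
  | succ k ih =>
    intro m h1 hm
    simp only [seqConvPow, seqConv]
    apply Finset.sum_eq_zero
    intro j hj
    simp only [Finset.mem_Ioo] at hj
    rw [ih (m - j) (by omega) (by omega), mul_zero]

def psi (c : ℕ → ℝ) (m : ℕ) : ℝ := ∑ k ∈ Finset.range m, seqConvPow c k m

lemma tsum_psi (c : ℕ → ℝ) (m : ℕ) (hm : 1 ≤ m) :
    (∑' k, seqConvPow c k m) = psi c m := by
  apply tsum_eq_sum
  intro k hk
  exact pow_vanish c k m hm (by simpa [Finset.mem_range, not_lt] using hk)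

lemma psi_rec (c : ℕ → ℝ) (m : ℕ) (hm : 1 ≤ m) :
    psi c m = c m + ∑ j ∈ Finset.Ioo 0 m, c j * psi c (m - j) := by
  obtain ⟨n, rfl⟩ : ∃ n, m = n + 1 := ⟨m - 1, by omega⟩
  unfold psi
  rw [Finset.sum_range_succ']
  have h1 : ∀ k ∈ Finset.range n, seqConvPow c (k + 1) (n + 1)
      = ∑ j ∈ Finset.Ioo 0 (n + 1), c j * seqConvPow c k (n + 1 - j) := by
    intro k _; rfl
  rw [Finset.sum_congr rfl h1, Finset.sum_comm]
  have h2 : ∀ j ∈ Finset.Ioo 0 (n + 1),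
      (∑ k ∈ Finset.range n, c j * seqConvPow c k (n + 1 - j))
        = c j * ∑ k ∈ Finset.range (n + 1 - j), seqConvPow c k (n + 1 - j) := by
    intro j hj
    simp only [Finset.mem_Ioo] at hj
    rw [← Finset.mul_sum]
    congr 1
    symm
    apply Finset.sum_subset
    · intro k hk
      simp only [Finset.mem_range] at hk ⊢
      omega
    · intro k _ hk
      simp only [Finset.mem_range, not_lt] at hk
      exact pow_vanish c k (n + 1 - j) (by omega) hk
  rw [Finset.sum_congr rfl h2]
  simp only [seqConvPow]
  ring

def lamMA (eps c : ℕ → ℝ) (t : ℕ) : ℝ :=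
  eps t + ∑ i ∈ Finset.range t, psi c (t - i) * eps i

lemma lamMA_AR (eps c : ℕ → ℝ) (t : ℕ) :
    lamMA eps c t = eps t + ∑ i ∈ Finset.range t, c (t - i) * lamMA eps c i := by
  unfold lamMA
  have expand : ∑ i ∈ Finset.range t, c (t - i) *
      (eps i + ∑ j ∈ Finset.range i, psi c (i - j) * eps j)
      = ∑ i ∈ Finset.range t, c (t - i) * eps i
        + ∑ i ∈ Finset.range t, ∑ j ∈ Finset.range i,
            c (t - i) * (psi c (i - j) * eps j) := by
    rw [← Finset.sum_add_distrib]
    apply Finset.sum_congr rfl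
    intro i _
    rw [mul_add, Finset.mul_sum]
  rw [expand]
  have swap : ∑ i ∈ Finset.range t, ∑ j ∈ Finset.range i,
      c (t - i) * (psi c (i - j) * eps j)
      = ∑ j ∈ Finset.range t, ∑ i ∈ Finset.Ioo j t,
          c (t - i) * (psi c (i - j) * eps j) := by
    apply Finset.sum_comm'
    intro i j
    simp only [Finset.mem_range, Finset.mem_Ioo]
    omega
  rw [swap]
  have inner : ∀ j ∈ Finset.range t,
      ∑ i ∈ Finset.Ioo j t, c (t - i) * (psi c (i - j) * eps j)
        = (∑ l ∈ Finset.Ioo 0 (t - j), c l * psi c (t - j - l)) * eps j := by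
    intro j hj
    simp only [Finset.mem_range] at hj
    rw [Finset.sum_mul]
    apply Finset.sum_nbij' (fun i => t - i) (fun l => t - l)
    · intro i hi; simp only [Finset.mem_Ioo] at hi ⊢; omega
    · intro l hl; simp only [Finset.mem_Ioo] at hl ⊢; omega
    · intro i hi; simp only [Finset.mem_Ioo] at hi; omega
    · intro l hl; simp only [Finset.mem_Ioo] at hl; omega
    · intro i hi
      simp only [Finset.mem_Ioo] at hi
      have : t - j - (t - i) = i - j := by omega
      rw [this, mul_assoc]
  rw [Finset.sum_congr rfl inner, ← Finset.sum_add_distrib]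
  congr 1
  apply Finset.sum_congr rfl
  intro j hj
  simp only [Finset.mem_range] at hj
  rw [← add_mul, psi_rec c (t - j) (by omega)]

/-- AR(∞) / MA(∞) equivalence: `λ_t = ε_t + ∑_{i=0}^{t-1} c_{t-i} λ_i` for all `t`
iff `λ_t = ε_t + ∑_{i=0}^{t-1} ψ_{t-i} ε_i` for all `t`, with `ψ = ∑_{k≥1} c^{*k}`. -/
theorem stmt1 (lam eps c : ℕ → ℝ) (hc : Summable fun i => |c i|)
    (habs : Summable fun p : ℕ × ℕ => |seqConvPow c p.1 p.2|) :
    (∀ t, lam t = eps t + ∑ i ∈ Finset.range t, c (t - i) * lam i) ↔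
      (∀ t, lam t = eps t + ∑ i ∈ Finset.range t,
        (∑' k, seqConvPow c k (t - i)) * eps i) := by
  have hMAeq : ∀ t, (eps t + ∑ i ∈ Finset.range t,
      (∑' k, seqConvPow c k (t - i)) * eps i) = lamMA eps c t := by
    intro t
    unfold lamMA
    congr 1
    apply Finset.sum_congr rfl
    intro i hi
    simp only [Finset.mem_range] at hi
    rw [tsum_psi c (t - i) (by omega)]
  constructor
  · intro hAR
    have hlam : ∀ t, lam t = lamMA eps c t := by
      intro t
      induction t using Nat.strong_induction_on with
      | _ t ih =>
        rw [hAR t, lamMA_AR eps c t]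
        congr 1
        apply Finset.sum_congr rfl
        intro i hi
        rw [ih i (Finset.mem_range.1 hi)]
    intro t
    rw [hlam t, hMAeq t]
  · intro hMA
    have hlam : ∀ t, lam t = lamMA eps c t := fun t => by rw [hMA t, hMAeq t]
    intro t
    rw [hlam t, lamMA_AR eps c t]
    congr 1
    apply Finset.sum_congr rfl
    intro i hi
    rw [hlam i]
end
end

section
/- Let $\lambda_t = \omega + \sum_{i=0}^{t-1} a\phi_{t-i}[\lambda_i + \Delta M_i]$ where $\Delta M_i = M_i - M_{i-1}$, $M_{-1} = 0$, with $\phi_i \ge 0$, $\sum \phi_i = 1$, $a \in (0,1)$. Then $\lambda_t = \omega + \omega\sum_{i=0}^{t-1}\psi_{t-i} + \sum_{j=0}^{t-1}\psi_{t-j}\Delta M_j$, where $\psi = \sum_{k=1}^\infty (a\phi)^{*k}$. -/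
open scoped BigOperators

noncomputable section

lemma psi_rec_s2 (b : ℕ → ℝ) (hs : ∀ m, Summable fun k => seqConvPow b k m) (m : ℕ) :
    (∑' k, seqConvPow b k m)
      = b m + ∑ j ∈ Finset.Ioo 0 m, b j * (∑' k, seqConvPow b k (m - j)) := by
  rw [Summable.tsum_eq_zero_add (hs m)]
  congr 1
  calc (∑' k, seqConvPow b (k + 1) m)
      = ∑' k, ∑ j ∈ Finset.Ioo 0 m, b j * seqConvPow b k (m - j) := rfl
    _ = ∑ j ∈ Finset.Ioo 0 m, ∑' k, b j * seqConvPow b k (m - j) := by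
        refine Summable.tsum_finsetSum fun j _ => ?_
        exact (hs (m - j)).mul_left (b j)
    _ = ∑ j ∈ Finset.Ioo 0 m, b j * (∑' k, seqConvPow b k (m - j)) := by
        refine Finset.sum_congr rfl fun j _ => ?_
        exact tsum_mul_left

lemma star (b : ℕ → ℝ) (hs : ∀ m, Summable fun k => seqConvPow b k m)
    (c : ℕ → ℝ) (t : ℕ) :
    ∑ i ∈ Finset.range t, (∑' k, seqConvPow b k (t - i)) * c i
      = ∑ i ∈ Finset.range t, b (t - i) * c i
        + ∑ i ∈ Finset.range t, b (t - i) * ∑ j ∈ Finset.range i,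
            (∑' k, seqConvPow b k (i - j)) * c j := by
  set ψ : ℕ → ℝ := fun m => ∑' k, seqConvPow b k m with hψdef
  have h1 : ∀ i ∈ Finset.range t, ψ (t - i) * c i
      = b (t - i) * c i + ∑ j ∈ Finset.Ioo 0 (t - i), b j * ψ (t - i - j) * c i := by
    intro i _
    rw [show ψ (t - i) = b (t - i) + ∑ j ∈ Finset.Ioo 0 (t - i), b j * ψ (t - i - j) from
      psi_rec_s2 b hs (t - i), add_mul, Finset.sum_mul]
  rw [Finset.sum_congr rfl h1, Finset.sum_add_distrib]
  congr 1
  have h2 : ∀ i ∈ Finset.range t,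
      b (t - i) * ∑ j ∈ Finset.range i, ψ (i - j) * c j
        = ∑ j ∈ Finset.range i, b (t - i) * (ψ (i - j) * c j) :=
    fun i _ => Finset.mul_sum _ _ _
  rw [Finset.sum_congr rfl h2]
  rw [Finset.sum_sigma', Finset.sum_sigma']
  refine Finset.sum_nbij' (fun p => ⟨t - p.2, p.1⟩) (fun p => ⟨p.2, t - p.1⟩) ?_ ?_ ?_ ?_ ?_
  · rintro ⟨i, j⟩ hp
    simp only [Finset.mem_sigma, Finset.mem_range, Finset.mem_Ioo] at hp ⊢
    omega
  · rintro ⟨i, j⟩ hp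
    simp only [Finset.mem_sigma, Finset.mem_range, Finset.mem_Ioo] at hp ⊢
    omega
  · rintro ⟨i, j⟩ hp
    simp only [Finset.mem_sigma, Finset.mem_range, Finset.mem_Ioo] at hp
    simp only [Sigma.mk.inj_iff]
    obtain ⟨h1, h2, h3⟩ := hp
    have h4 : j ≤ t := le_trans (le_of_lt h3) (Nat.sub_le t i)
    refine ⟨trivial, heq_of_eq (by omega)⟩
  · rintro ⟨i, j⟩ hp
    simp only [Finset.mem_sigma, Finset.mem_range, Finset.mem_Ioo] at hp
    simp only [Sigma.mk.inj_iff]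
    obtain ⟨h1, h2⟩ := hp
    refine ⟨?_, HEq.refl j⟩
    omega
  · rintro ⟨i, j⟩ hp
    simp only [Finset.mem_sigma, Finset.mem_range, Finset.mem_Ioo] at hp
    obtain ⟨h1, h2, h3⟩ := hp
    have h4 : j ≤ t := le_trans (le_of_lt h3) (Nat.sub_le t i)
    have e1 : t - (t - j) = j := by omega
    have e2 : t - j - i = t - i - j := by omega
    simp only [e1, e2]
    ring

theorem stmt2 (φ : ℕ → ℝ) (hφ0 : φ 0 = 0) (hφpos : ∀ i, 0 ≤ φ i)
    (hφsum : Summable φ) (hφ1 : ∑' i, φ i = 1)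
    (a w : ℝ) (ha : a ∈ Set.Ioo (0 : ℝ) 1)
    (M lam ΔM : ℕ → ℝ)
    (hΔM : ∀ i, ΔM i = M i - if i = 0 then 0 else M (i - 1))
    (hψ : ∀ m, Summable fun k => seqConvPow (fun i => a * φ i) k m)
    (hlam : ∀ t, lam t = w + ∑ i ∈ Finset.range t, a * φ (t - i) * (lam i + ΔM i)) :
    ∀ t, lam t = w
        + w * ∑ i ∈ Finset.range t, (∑' k, seqConvPow (fun i => a * φ i) k (t - i))
        + ∑ j ∈ Finset.range t, (∑' k, seqConvPow (fun i => a * φ i) k (t - j)) * ΔM j := by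
  set b : ℕ → ℝ := fun i => a * φ i with hb
  set ψ : ℕ → ℝ := fun m => ∑' k, seqConvPow b k m with hψdef
  intro t
  induction t using Nat.strong_induction_on with
  | _ t ih =>
    have hsub : ∀ i ∈ Finset.range t, b (t - i) * (lam i + ΔM i)
        = b (t - i) * w + b (t - i) * (w * ∑ j ∈ Finset.range i, ψ (i - j))
          + b (t - i) * (∑ j ∈ Finset.range i, ψ (i - j) * ΔM j)
          + b (t - i) * ΔM i := by
      intro i hi
      rw [ih i (Finset.mem_range.mp hi)]
      ring
    have hΔ : ∑ i ∈ Finset.range t, ψ (t - i) * ΔM i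
        = ∑ i ∈ Finset.range t, b (t - i) * ΔM i
          + ∑ i ∈ Finset.range t, b (t - i) * ∑ j ∈ Finset.range i, ψ (i - j) * ΔM j :=
      star b hψ ΔM t
    have h1 : ∑ i ∈ Finset.range t, ψ (t - i) * (fun _ => (1:ℝ)) i
        = ∑ i ∈ Finset.range t, b (t - i) * (fun _ => (1:ℝ)) i
          + ∑ i ∈ Finset.range t, b (t - i) * ∑ j ∈ Finset.range i,
              ψ (i - j) * (fun _ => (1:ℝ)) j :=
      star b hψ (fun _ => (1:ℝ)) t
    simp only [mul_one] at h1
    have hA : ∑ i ∈ Finset.range t, b (t - i) * w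
        = w * ∑ i ∈ Finset.range t, b (t - i) := by
      rw [Finset.mul_sum]; exact Finset.sum_congr rfl fun i _ => mul_comm _ _
    have hB : ∑ i ∈ Finset.range t, b (t - i) * (w * ∑ j ∈ Finset.range i, ψ (i - j))
        = w * ∑ i ∈ Finset.range t, b (t - i) * ∑ j ∈ Finset.range i, ψ (i - j) := by
      rw [Finset.mul_sum]; exact Finset.sum_congr rfl fun i _ => by ring
    show lam t = w + w * ∑ i ∈ Finset.range t, ψ (t - i)
        + ∑ j ∈ Finset.range t, ψ (t - j) * ΔM j
    calc lam t = w + ∑ i ∈ Finset.range t, b (t - i) * (lam i + ΔM i) := hlam t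
      _ = w + (∑ i ∈ Finset.range t, b (t - i) * w
            + ∑ i ∈ Finset.range t, b (t - i) * (w * ∑ j ∈ Finset.range i, ψ (i - j))
            + ∑ i ∈ Finset.range t, b (t - i) * (∑ j ∈ Finset.range i, ψ (i - j) * ΔM j)
            + ∑ i ∈ Finset.range t, b (t - i) * ΔM i) := by
          rw [Finset.sum_congr rfl hsub, Finset.sum_add_distrib, Finset.sum_add_distrib,
            Finset.sum_add_distrib]
      _ = w + w * ∑ i ∈ Finset.range t, ψ (t - i)
            + ∑ j ∈ Finset.range t, ψ (t - j) * ΔM j := by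
          rw [hΔ, h1, hA, hB]; ring
end
end
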